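/- Kruskal's theorem for labelled trees of bounded branching degree (∀n KT_ℓ(n)): for every natural number n and every well quasi-order (Q, ≤_Q), the set T_n(Q) of finite rooted ordered trees with labels in Q and branching degree at most n, quasi-ordered by the embeddability relation ⪯, is a well quasi-order. -/

import Mathlib

/-- Finite rooted ordered trees (rose trees) with labels in `Q`. -/
inductive RoseTree (Q : Type) : Type
  | node : Q → List (RoseTree Q) → RoseTree Q

/-- The embeddability relation `⪯` on labelled trees. -/
inductive TreeEmb {Q : Type} (le : Q → Q → Prop) : RoseTree Q → RoseTree Q → Prop
  | subtree {t : RoseTree Q} {q : Q} {ss : List (RoseTree Q)} {s : RoseTree Q} :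
      s ∈ ss → TreeEmb le t s → TreeEmb le t (RoseTree.node q ss)
  | node {p q : Q} {ts ss : List (RoseTree Q)} :
      le p q → List.SublistForall₂ (TreeEmb le) ts ss →
      TreeEmb le (RoseTree.node p ts) (RoseTree.node q ss)

/-- `DegLe n t` says the tree `t` has branching degree at most `n`:
every node has at most `n` children. -/
inductive DegLe {Q : Type} (n : ℕ) : RoseTree Q → Prop
  | node (q : Q) (ts : List (RoseTree Q)) :
      ts.length ≤ n → (∀ t ∈ ts, DegLe n t) → DegLe n (RoseTree.node q ts)

/- ### Auxiliary lemmas -/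

lemma tsize_lt {Q : Type} {t : RoseTree Q} {q : Q} {ts : List (RoseTree Q)}
    (h : t ∈ ts) : sizeOf t < sizeOf (RoseTree.node q ts) := by
  have := List.sizeOf_lt_of_mem h
  simp only [RoseTree.node.sizeOf_spec]
  omega

lemma slf_refl {α : Type} {r : α → α → Prop} :
    ∀ {l : List α}, (∀ a ∈ l, r a a) → List.SublistForall₂ r l l
  | [], _ => List.SublistForall₂.nil
  | a :: l, h => List.SublistForall₂.cons (h a (by simp))
      (slf_refl fun b hb => h b (by simp [hb]))

lemma emb_refl {Q : Type} {le : Q → Q → Prop} (hrefl : Reflexive le) :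
    ∀ t : RoseTree Q, TreeEmb le t t
  | .node q ts => by
    refine TreeEmb.node (hrefl q) (slf_refl fun t ht => ?_)
    have := tsize_lt (q := q) ht
    exact emb_refl hrefl t
termination_by t => sizeOf t

lemma slf_mem_exists {α : Type} {r : α → α → Prop} {l₁ l₂ : List α}
    (h : List.SublistForall₂ r l₁ l₂) {a : α} (ha : a ∈ l₁) :
    ∃ b ∈ l₂, r a b := by
  induction h with
  | nil => cases ha
  | cons hr _ ih =>
    rcases List.mem_cons.1 ha with rfl | ha'
    · exact ⟨_, by simp, hr⟩
    · obtain ⟨b, hb, hrb⟩ := ih ha'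
      exact ⟨b, by simp [hb], hrb⟩
  | cons_right _ ih =>
    obtain ⟨b, hb, hrb⟩ := ih ha
    exact ⟨b, by simp [hb], hrb⟩

lemma slf_comp {α : Type} {r s t : α → α → Prop} :
    ∀ {l₁ l₂ l₃ : List α},
      (∀ a b c, c ∈ l₃ → r a b → s b c → t a c) →
      List.SublistForall₂ r l₁ l₂ → List.SublistForall₂ s l₂ l₃ →
      List.SublistForall₂ t l₁ l₃ := by
  intro l₁ l₂ l₃ hcomp h12 h23
  induction h23 generalizing l₁ with
  | nil =>
    cases h12
    exact List.SublistForall₂.nil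
  | @cons b c l₂' l₃' hbc h23' ih =>
    cases h12 with
    | nil => exact List.SublistForall₂.nil
    | cons hab h12' =>
      exact List.SublistForall₂.cons (hcomp _ _ _ (by simp) hab hbc)
        (ih (fun a b c hc => hcomp a b c (by simp [hc])) h12')
    | cons_right h12' =>
      exact List.SublistForall₂.cons_right
        (ih (fun a b c hc => hcomp a b c (by simp [hc])) h12')
  | @cons_right c l₂' l₃' h23' ih =>
    exact List.SublistForall₂.cons_right
      (ih (fun a b c hc => hcomp a b c (by simp [hc])) h12)

lemma emb_trans {Q : Type} {le : Q → Q → Prop} (htrans : Transitive le) :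
    ∀ (v t u : RoseTree Q), TreeEmb le t u → TreeEmb le u v → TreeEmb le t v := by
  have key : ∀ N : ℕ, ∀ v : RoseTree Q, sizeOf v ≤ N → ∀ t u : RoseTree Q,
      TreeEmb le t u → TreeEmb le u v → TreeEmb le t v := by
    intro N
    induction N with
    | zero =>
      intro v hv
      cases v with
      | node q ts => simp [RoseTree.node.sizeOf_spec] at hv
    | succ N ih =>
      intro v hv t u htu huv
      cases huv with
      | @subtree _ q' ss' s' hmem h2 =>
        refine TreeEmb.subtree hmem (ih _ ?_ t u htu h2)
        have := tsize_lt (q := q') hmem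
        omega
      | @node p q us vs hpq slf =>
        cases htu with
        | subtree hmem hemb =>
          obtain ⟨w, hw, hw2⟩ := slf_mem_exists slf hmem
          refine TreeEmb.subtree hw (ih _ ?_ t _ hemb hw2)
          have := tsize_lt (q := q) hw
          omega
        | node hle slf' =>
          refine TreeEmb.node (htrans hle hpq) ?_
          refine slf_comp (fun a b c hc hab hbc => ?_) slf' slf
          refine ih _ ?_ a b hab hbc
          have := tsize_lt (q := q) hc
          omega
  exact fun v => key (sizeOf v) v le_rfl

/-- Kruskal's theorem for labelled trees of bounded branching degree,
∀n KT_ℓ(n): for every `n` and every well quasi-order `(Q, le)`, the trees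
with labels in `Q` and branching degree at most `n`, under embeddability,
form a well quasi-order. -/
theorem kruskal_labelled_bounded (n : ℕ) {Q : Type} (le : Q → Q → Prop)
    (hrefl : Reflexive le) (htrans : Transitive le)
    (hwqo : ∀ q : ℕ → Q, ∃ i j : ℕ, i < j ∧ le (q i) (q j)) :
    ∀ f : ℕ → RoseTree Q, (∀ i, DegLe n (f i)) →
      ∃ i j : ℕ, i < j ∧ TreeEmb le (f i) (f j) := by
  haveI : IsRefl (RoseTree Q) (TreeEmb le) := ⟨emb_refl hrefl⟩
  haveI : IsTrans (RoseTree Q) (TreeEmb le) := ⟨fun a b c h1 h2 => emb_trans htrans c a b h1 h2⟩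
  haveI : IsPreorder (RoseTree Q) (TreeEmb le) :=
    { refl := emb_refl hrefl, trans := fun a b c h1 h2 => emb_trans htrans c a b h1 h2 }
  suffices h : (Set.univ : Set (RoseTree Q)).PartiallyWellOrderedOn (TreeEmb le) by
    intro f _
    exact h.exists_lt (f := f) (fun _ => Set.mem_univ _)
  rw [Set.PartiallyWellOrderedOn.iff_not_exists_isMinBadSeq sizeOf]
  rintro ⟨f, hbad, hmin⟩
  -- labels and children
  set lab : ℕ → Q := fun i => match f i with | .node q _ => q with hlab
  set ch : ℕ → List (RoseTree Q) := fun i => match f i with | .node _ ts => ts with hch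
  have hfi : ∀ i, f i = RoseTree.node (lab i) (ch i) := by
    intro i
    rw [hlab, hch]
    cases hfe : f i with
    | node q ts => simp [hfe]
  -- the set of immediate subtrees
  set S : Set (RoseTree Q) := {t | ∃ i, t ∈ ch i} with hS
  have hSpwo : S.PartiallyWellOrderedOn (TreeEmb le) := by
    classical
    rw [Set.partiallyWellOrderedOn_iff_exists_lt]
    intro g hg
    by_contra hcon
    push_neg at hcon
    have hidx : ∀ k, ∃ i, g k ∈ ch i := fun k => hg k
    choose idx hidx using hidx
    -- minimal index
    have hP : ∃ m : ℕ, ∃ k, idx k = m := ⟨idx 0, 0, rfl⟩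
    obtain ⟨k0, hk0⟩ := Nat.find_spec hP
    have hk0min : ∀ k, idx k0 ≤ idx k := by
      intro k
      rw [hk0]
      exact Nat.find_min' hP ⟨k, rfl⟩
    set d := idx k0 with hd
    set h : ℕ → RoseTree Q := fun j => if j < d then f j else g (k0 + (j - d)) with hh
    refine hmin d h (fun m hm => by simp [hh, hm]) ?_ ?_
    · -- size decreases at position d
      have h1 : h d = g k0 := by simp [hh]
      rw [h1, hfi d, hk0]
      exact tsize_lt (hk0 ▸ hidx k0)
    · -- h is a bad sequence
      constructor
      · exact fun _ => Set.mem_univ _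
      · intro a b hab hR
        rcases lt_or_ge b d with hb | hb
        · rw [hh] at hR
          simp only [if_pos (hab.trans hb), if_pos hb] at hR
          exact hbad.2 a b hab hR
        · rcases lt_or_ge a d with ha | ha
          · rw [hh] at hR
            simp only [if_pos ha, if_neg (not_lt.2 hb)] at hR
            set k := k0 + (b - d) with hk
            have : TreeEmb le (f a) (f (idx k)) := by
              rw [hfi (idx k)]
              exact TreeEmb.subtree (hidx k) hR
            exact hbad.2 a (idx k) (lt_of_lt_of_le ha (hk0min k)) this
          · rw [hh] at hR
            simp only [if_neg (not_lt.2 ha), if_neg (not_lt.2 hb)] at hR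
            exact hcon (k0 + (a - d)) (k0 + (b - d)) (by omega) hR
  -- Higman's lemma
  have hL := Set.PartiallyWellOrderedOn.partiallyWellOrderedOn_sublistForall₂
    (TreeEmb le) hSpwo
  have hchS : ∀ i, ch i ∈ {l : List (RoseTree Q) | ∀ x, x ∈ l → x ∈ S} :=
    fun i x hx => ⟨i, hx⟩
  haveI : IsPreorder (List (RoseTree Q)) (List.SublistForall₂ (TreeEmb le)) := {}
  obtain ⟨g, hg⟩ := hL.exists_monotone_subseq (f := ch) hchS
  obtain ⟨i, j, hij, hle⟩ := hwqo (fun k => lab (g k))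
  have : TreeEmb le (f (g i)) (f (g j)) := by
    rw [hfi (g i), hfi (g j)]
    exact TreeEmb.node hle (hg i j hij.le)
  exact hbad.2 (g i) (g j) (g.strictMono hij) this
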